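/- Let G be a connected simple graph with at least 3 vertices, x, y distinct vertices, and σ ∈ A_y \ A_x with |σ| ≥ 2. Suppose e ∈ σ is a leaf-edge of G_σ whose leaf endpoint w satisfies: w ≠ x, and w is not adjacent in G to any vertex z ∈ V(G) \ V_σ. Then σ \ {e} ∈ A_y \ A_x. -/

import Mathlib

open SimpleGraph

/-- `Shade_v(F)`: edges of `G` with an endpoint connected to `v` by an `F`-path. -/
def Shade {V : Type*} (G : SimpleGraph V) (v : V) (F : Set (Sym2 V)) : Set (Sym2 V) :=
  {e ∈ G.edgeSet | ∃ u ∈ e, (SimpleGraph.fromEdgeSet F).Reachable u v}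

/-- The simplicial complex `A_v`. -/
def Avert {V : Type*} (G : SimpleGraph V) (v : V) : Set (Set (Sym2 V)) :=
  {F | F ⊆ G.edgeSet ∧ Shade G v F ⊂ G.edgeSet}

/-- Vertex set of the edge-induced subgraph `G_σ`. -/
def edgeVerts {V : Type*} (σ : Set (Sym2 V)) : Set V :=
  {u | ∃ e ∈ σ, u ∈ e}

/-- Connectedness of the edge-induced subgraph `G_σ`. -/
def edgeConnected {V : Type*} (σ : Set (Sym2 V)) : Prop :=
  σ.Nonempty ∧ ∀ u ∈ edgeVerts σ, ∀ w ∈ edgeVerts σ,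
    (SimpleGraph.fromEdgeSet σ).Reachable u w

/-- `X` is a vertex cover of `G`. -/
def IsVertexCover {V : Type*} (G : SimpleGraph V) (X : Set V) : Prop :=
  ∀ e ∈ G.edgeSet, ∃ u ∈ e, u ∈ X

/-- A nucleus of `G`: a connected subgraph whose vertex set is a vertex cover. -/
def IsNucleus {V : Type*} (G : SimpleGraph V) (N : G.Subgraph) : Prop :=
  N.Connected ∧ _root_.IsVertexCover G N.verts

/-- The `U`-nucleus complex `Δ^G_U`. -/
def nucleusComplex {V : Type*} (G : SimpleGraph V) (U : Set V) : Set (Set (Sym2 V)) :=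
  {S | ∃ N : G.Subgraph, IsNucleus G N ∧ U ⊆ N.verts ∧ S = G.edgeSet \ N.edgeSet}

theorem stmt_13 {V : Type*} [Fintype V] (G : SimpleGraph V) (hG : G.Connected)
    (h3 : 3 ≤ Fintype.card V) (x y : V) (hxy : x ≠ y)
    (σ : Set (Sym2 V)) (hσ : σ ∈ Avert G y \ Avert G x) (hσ2 : 2 ≤ σ.ncard)
    (e : Sym2 V) (he : e ∈ σ) (w : V) (hwe : w ∈ e)
    (hleaf : ∀ f ∈ σ, w ∈ f → f = e)
    (hwx : w ≠ x)
    (hwz : ∀ z : V, z ∉ edgeVerts σ → ¬ G.Adj w z) :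
    σ \ {e} ∈ Avert G y \ Avert G x := by

  obtain ⟨⟨hσE, hshy⟩, hnx⟩ := hσ
  have hσ'E : σ \ {e} ⊆ G.edgeSet := fun f hf => hσE hf.1
  have heE : e ∈ G.edgeSet := hσE he
  set w' := Sym2.Mem.other hwe with hw'def
  have hspec : s(w, w') = e := Sym2.other_spec hwe
  have hww' : w ≠ w' := by
    intro h
    have := G.not_isDiag_of_mem_edgeSet heE
    rw [← hspec, Sym2.mk_isDiag_iff] at this
    exact this h
  have mem_e : ∀ z, z ∈ e → z ≠ w → z = w' := by
    intro z hz hzw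
    rw [← hspec, Sym2.mem_iff] at hz
    tauto
  -- adjacency away from w survives deleting e
  have hadj' : ∀ a b : V, a ≠ w → b ≠ w → (fromEdgeSet σ).Adj a b →
      (fromEdgeSet (σ \ {e})).Adj a b := by
    intro a b ha hb hab
    rw [fromEdgeSet_adj] at hab ⊢
    refine ⟨⟨hab.1, ?_⟩, hab.2⟩
    intro hf
    rw [Set.mem_singleton_iff] at hf
    have : w ∈ s(a, b) := hf ▸ hwe
    rw [Sym2.mem_iff] at this
    rcases this with h | h
    · exact ha h.symm
    · exact hb h.symm
  have edge_at_w : ∀ a : V, (fromEdgeSet σ).Adj a w → a = w' := by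
    intro a h
    rw [fromEdgeSet_adj] at h
    have he' : s(a, w) = e := hleaf _ h.1 (Sym2.mem_mk_right a w)
    exact mem_e a (he' ▸ Sym2.mem_mk_left a w) h.2
  -- reachability to x away from w survives deleting e
  have key : ∀ n (u : V), u ≠ w → ∀ p : (fromEdgeSet σ).Walk u x, p.length ≤ n →
      (fromEdgeSet (σ \ {e})).Reachable u x := by
    intro n
    induction n with
    | zero =>
      intro u hu p hp
      have : u = x := p.eq_of_length_eq_zero (Nat.le_zero.mp hp)
      exact this ▸ Reachable.refl _
    | succ n ih =>
      intro u hu p hp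
      cases p with
      | nil => exact Reachable.refl _
      | @cons _ b _ h q =>
        by_cases hb : b = w
        · cases q with
          | nil => exact absurd hb.symm hwx
          | @cons _ c _ h2 q2 =>
            have hu' : u = w' := edge_at_w u (by rw [hb] at h; exact h)
            have hc : c = w' := by
              have h2' : (fromEdgeSet σ).Adj c w := by rw [hb] at h2; exact h2.symm
              exact edge_at_w c h2'
            have huc : c = u := by rw [hu', hc]
            have hlen : q2.length ≤ n := by
              simp only [Walk.length_cons] at hp
              omega
            exact ih u hu (q2.copy huc rfl) (by rwa [Walk.length_copy])
        · have hadj : (fromEdgeSet (σ \ {e})).Adj u b := hadj' u b hu hb h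
          have : q.length ≤ n := by
            simp only [Walk.length_cons] at hp
            omega
          exact hadj.reachable.trans (ih b hb q this)
  have reach' : ∀ u : V, u ≠ w → (fromEdgeSet σ).Reachable u x →
      (fromEdgeSet (σ \ {e})).Reachable u x := by
    intro u hu hr
    obtain ⟨p⟩ := hr
    exact key p.length u hu p le_rfl
  -- Shade_x σ = edgeSet
  have hShx : Shade G x σ = G.edgeSet := by
    have hsub : Shade G x σ ⊆ G.edgeSet := fun f hf => hf.1
    by_contra hne
    exact hnx ⟨hσE, ssubset_of_subset_of_ne hsub hne⟩
  -- w' is reachable to x in σ \ {e}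
  have hw'x : (fromEdgeSet (σ \ {e})).Reachable w' x := by
    have heS : e ∈ Shade G x σ := hShx ▸ heE
    obtain ⟨u, hue, hux⟩ := heS.2
    by_cases h : u = w
    · subst h
      obtain ⟨p⟩ := hux
      cases p with
      | nil => exact absurd rfl hwx
      | @cons _ c _ h2 q =>
        have hc : c = w' := edge_at_w c h2.symm
        have : (fromEdgeSet σ).Reachable c x := ⟨q⟩
        exact reach' w' (Ne.symm hww') (hc ▸ this)
    · have : u = w' := mem_e u hue h
      exact this ▸ reach' u h hux
  -- Shade_x (σ \ {e}) = edgeSet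
  have hShx' : Shade G x (σ \ {e}) = G.edgeSet := by
    apply Set.Subset.antisymm (fun f hf => hf.1)
    intro g hg
    refine ⟨hg, ?_⟩
    have hgS : g ∈ Shade G x σ := hShx ▸ hg
    obtain ⟨u, hug, hux⟩ := hgS.2
    by_cases h : u = w
    · rw [h] at hug hux
      by_cases hge : g = e
      · exact ⟨w', by rw [hge, ← hspec]; exact Sym2.mem_mk_right w w', hw'x⟩
      · set z := Sym2.Mem.other hug with hzdef
        have hzspec : s(w, z) = g := Sym2.other_spec hug
        have hzw : z ≠ w := by
          intro hh
          have := G.not_isDiag_of_mem_edgeSet hg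
          rw [← hzspec, Sym2.mk_isDiag_iff] at this
          exact this hh.symm
        have hadjwz : G.Adj w z := by
          rw [← SimpleGraph.mem_edgeSet, hzspec]; exact hg
        have hzσ : z ∈ edgeVerts σ := by
          by_contra hc
          exact hwz z hc hadjwz
        obtain ⟨f, hfσ, hzf⟩ := hzσ
        by_cases hfe : f = e
        · have : z = w' := mem_e z (hfe ▸ hzf) hzw
          exact ⟨z, hzspec ▸ Sym2.mem_mk_right w z, this ▸ hw'x⟩
        · have hfS : f ∈ Shade G x σ := hShx ▸ hσE hfσ
          obtain ⟨v, hvf, hvx⟩ := hfS.2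
          have hvw : v ≠ w := by
            intro hh
            exact hfe (hleaf f hfσ (hh ▸ hvf))
          have hv' : (fromEdgeSet (σ \ {e})).Reachable v x := reach' v hvw hvx
          by_cases hzv : z = v
          · exact ⟨z, hzspec ▸ Sym2.mem_mk_right w z, hzv ▸ hv'⟩
          · have hfzv : f = s(z, v) := (Sym2.mem_and_mem_iff hzv).mp ⟨hzf, hvf⟩
            have hadjzv : (fromEdgeSet (σ \ {e})).Adj z v := by
              rw [fromEdgeSet_adj]
              exact ⟨⟨hfzv ▸ hfσ, by simpa [← hfzv] using hfe⟩, hzv⟩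
            exact ⟨z, hzspec ▸ Sym2.mem_mk_right w z, hadjzv.reachable.trans hv'⟩
    · exact ⟨u, hug, reach' u h hux⟩
  constructor
  · refine ⟨hσ'E, ?_⟩
    have hmono : Shade G y (σ \ {e}) ⊆ Shade G y σ := by
      intro f hf
      obtain ⟨hfE, u, huf, hur⟩ := hf
      exact ⟨hfE, u, huf, hur.mono (fromEdgeSet_mono (Set.diff_subset))⟩
    exact ssubset_of_subset_of_ssubset hmono hshy
  · intro hmem
    exact hmem.2.ne hShx'
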